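/- In the block-separable setting, a point x ∈ Ω = Ω₁ × ⋯ × Ω_m is stationary for min_{x∈Ω} f(x) if and only if pᵢ(x) = xᵢ for every i = 1, …, m, where pᵢ(x) = argmin_{zᵢ∈Ωᵢ} hⁱ(zᵢ, x). -/

import Mathlib

open scoped RealInnerProductSpace

section Aux

variable {F : Type*} [NormedAddCommGroup F] [InnerProductSpace ℝ F] [CompleteSpace F]

lemma grad_inner_eq (g : F → ℝ) (a d : F) : ⟪gradient g a, d⟫ = fderiv ℝ g a d := by
  simp [gradient, InnerProductSpace.toDual_symm_apply]

lemma var_ineq {s : Set F} (hs : Convex ℝ s) {g : F → ℝ} (hg : ContDiff ℝ 1 g)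
    {a : F} (ha : a ∈ s) (hmin : ∀ u ∈ s, g a ≤ g u) {u : F} (hu : u ∈ s) :
    0 ≤ ⟪gradient g a, u - a⟫ := by
  rw [grad_inner_eq]
  have hd : HasFDerivWithinAt g (fderiv ℝ g a) s a :=
    ((hg.differentiable one_ne_zero) a).hasFDerivAt.hasFDerivWithinAt
  have hmin' : IsLocalMinOn g s a :=
    (isMinOn_iff.mpr hmin).localize
  have hcone : u - a ∈ posTangentConeAt s a :=
    sub_mem_posTangentConeAt_of_segment_subset (hs.segment_subset ha hu)
  exact hmin'.hasFDerivWithinAt_nonneg hd hcone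

end Aux

section Block

variable {m : ℕ} {n : Fin m → ℕ}

noncomputable def blkL (n : Fin m → ℕ) (i : Fin m) :
    EuclideanSpace ℝ (Fin (n i)) →L[ℝ] PiLp 2 (fun j => EuclideanSpace ℝ (Fin (n j))) :=
  LinearMap.toContinuousLinearMap
    (((WithLp.linearEquiv 2 ℝ (∀ j, EuclideanSpace ℝ (Fin (n j)))).symm.toLinearMap).comp
      (LinearMap.single ℝ (fun j => EuclideanSpace ℝ (Fin (n j))) i))

lemma blkL_apply (i : Fin m) (d : EuclideanSpace ℝ (Fin (n i))) (j : Fin m) :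
    (blkL n i d) j =
      @Pi.single (Fin m) (fun j => EuclideanSpace ℝ (Fin (n j))) _ _ i d j := rfl

lemma block_grad_inner (f : PiLp 2 (fun j => EuclideanSpace ℝ (Fin (n j))) → ℝ)
    (hf : ContDiff ℝ 1 f) (x : PiLp 2 (fun j => EuclideanSpace ℝ (Fin (n j))))
    (i : Fin m) (d : EuclideanSpace ℝ (Fin (n i))) :
    ⟪gradient (fun u => f (WithLp.toLp 2 (Function.update x i u))) (x i), d⟫ =
      ⟪(gradient f x) i, d⟫ := by
  classical
  have hfx : HasFDerivAt f (fderiv ℝ f x) x := ((hf.differentiable one_ne_zero) x).hasFDerivAt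
  have hcomp : HasFDerivAt (fun u => f (WithLp.toLp 2 (Function.update x i u)))
      ((fderiv ℝ f x).comp (blkL n i)) (x i) := by
    have key : (fun u => f (WithLp.toLp 2 (Function.update x i u))) =
        fun u => f (blkL n i u + (x - blkL n i (x i))) := by
      funext u
      congr 1
      ext j
      by_cases h : j = i
      · subst h
        simp [blkL_apply, Function.update_self]
      · simp [Function.update_of_ne h, blkL_apply, Pi.single_eq_of_ne h]
    rw [key]
    have h1 : HasFDerivAt (fun u : EuclideanSpace ℝ (Fin (n i)) =>
        blkL n i u + (x - blkL n i (x i))) (blkL n i) (x i) :=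
      (blkL n i).hasFDerivAt.add_const _
    have h2 : blkL n i (x i) + (x - blkL n i (x i)) = x := by abel
    have hfx' : HasFDerivAt f (fderiv ℝ f x) (blkL n i (x i) + (x - blkL n i (x i))) := by
      rw [h2]; exact hfx
    exact hfx'.comp (x i) h1
  rw [show (⟪gradient (fun u => f (WithLp.toLp 2 (Function.update x i u))) (x i), d⟫ : ℝ)
      = fderiv ℝ (fun u => f (WithLp.toLp 2 (Function.update x i u))) (x i) d by
    simp [gradient, InnerProductSpace.toDual_symm_apply]]
  rw [hcomp.fderiv]
  have h3 : fderiv ℝ f x (blkL n i d) = ⟪gradient f x, blkL n i d⟫ := by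
    simp [gradient, InnerProductSpace.toDual_symm_apply]
  simp only [ContinuousLinearMap.coe_comp', Function.comp_apply, h3]
  rw [PiLp.inner_apply, Finset.sum_eq_single i]
  · rw [show (blkL n i d) i = d by rw [blkL_apply]; simp]
  · intro j _ hj
    rw [show (blkL n i d) j = 0 by
      rw [blkL_apply]
      exact Pi.single_eq_of_ne (M := fun j => EuclideanSpace ℝ (Fin (n j))) hj d]
    simp
  · simp

end Block

theorem statement12 {m : ℕ} {n : Fin m → ℕ}
    (Ω : ∀ i, Set (EuclideanSpace ℝ (Fin (n i))))
    (hΩc : ∀ i, IsClosed (Ω i)) (hΩconv : ∀ i, Convex ℝ (Ω i))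
    (hΩne : ∀ i, (Ω i).Nonempty)
    (f : PiLp 2 (fun i => EuclideanSpace ℝ (Fin (n i))) → ℝ) (hf : ContDiff ℝ 1 f)
    (hi : ∀ i, EuclideanSpace ℝ (Fin (n i)) →
      PiLp 2 (fun i => EuclideanSpace ℝ (Fin (n i))) → ℝ)
    (hismooth : ∀ i y, ContDiff ℝ 1 (fun u => hi i u y))
    (x : PiLp 2 (fun i => EuclideanSpace ℝ (Fin (n i)))) (hx : ∀ j, x j ∈ Ω j)
    (hiconv : ∀ i, ∀ u ∈ Ω i, ∀ v ∈ Ω i,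
      hi i u x + ⟪gradient (fun w => hi i w x) u, v - u⟫ ≤ hi i v x)
    (higrad : ∀ i, ∀ d : EuclideanSpace ℝ (Fin (n i)), x i + d ∈ Ω i →
      ⟪gradient (fun u => hi i u x) (x i), d⟫ =
      ⟪gradient (fun u => f (WithLp.toLp 2 (Function.update x i u))) (x i), d⟫)
    (p : ∀ i, EuclideanSpace ℝ (Fin (n i)))
    (hpΩ : ∀ i, p i ∈ Ω i)
    (hpmin : ∀ i, ∀ u ∈ Ω i, hi i (p i) x ≤ hi i u x)
    (hpuniq : ∀ i, ∀ w ∈ Ω i, (∀ u ∈ Ω i, hi i w x ≤ hi i u x) → w = p i) :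
    (∀ y : PiLp 2 (fun i => EuclideanSpace ℝ (Fin (n i))), (∀ j, y j ∈ Ω j) →
      0 ≤ ⟪gradient f x, y - x⟫) ↔ ∀ i, p i = x i := by
  classical
  constructor
  · intro hstat i
    refine (hpuniq i (x i) (hx i) ?_).symm
    intro u hu
    have hd : x i + (u - x i) ∈ Ω i := by simpa using hu
    have h1 := hiconv i (x i) (hx i) u hu
    have h2 : (0:ℝ) ≤ ⟪gradient (fun w => hi i w x) (x i), u - x i⟫ := by
      rw [higrad i (u - x i) hd, block_grad_inner f hf x i (u - x i)]
      have hy : ∀ j, Function.update x i u j ∈ Ω j := by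
        intro j
        by_cases h : j = i
        · subst h; simpa using hu
        · simpa [Function.update_of_ne h] using hx j
      set y0 : PiLp 2 (fun j => EuclideanSpace ℝ (Fin (n j))) := WithLp.toLp 2 (Function.update x i u)
        with hy0
      have hs := hstat y0 hy
      rw [PiLp.inner_apply] at hs
      refine le_of_le_of_eq hs ?_
      rw [Finset.sum_eq_single i]
      · rw [PiLp.sub_apply, hy0]; simp [Function.update_self]
      · intro j _ hj
        rw [PiLp.sub_apply, hy0]; simp [Function.update_of_ne hj]
      · simp
    linarith
  · intro hp y hy
    rw [PiLp.inner_apply]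
    apply Finset.sum_nonneg
    intro j _
    have hsub : (y - x) j = y j - x j := rfl
    rw [hsub]
    have hdj : x j + (y j - x j) ∈ Ω j := by simpa using hy j
    have hgr := higrad j (y j - x j) hdj
    rw [block_grad_inner f hf x j (y j - x j)] at hgr
    rw [← hgr]
    have hminj : ∀ u ∈ Ω j, hi j (x j) x ≤ hi j u x := by
      intro u hu
      have := hpmin j u hu
      rwa [hp j] at this
    exact var_ineq (hΩconv j) (hismooth j x) (hx j) hminj (hy j)
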